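/- If a set of cells of an I×J table contains a k-cycle for some k ≥ 2, then the corresponding columns of the design matrix of the two-way independence loglinear model are linearly dependent; in particular, the set is not a strictly minimal pattern. -/

import Mathlib

def designCol (I J : ℕ) (c : Fin I × Fin J) : Unit ⊕ Fin (I - 1) ⊕ Fin (J - 1) → ℝ :=
  fun r => match r with
  | Sum.inl _ => 1
  | Sum.inr (Sum.inl a) => if (c.1 : ℕ) = (a : ℕ) then 1 else 0
  | Sum.inr (Sum.inr b) => if (c.2 : ℕ) = (b : ℕ) then 1 else 0

def IsKCycle {I J : ℕ} (k : ℕ) (C : Finset (Fin I × Fin J)) : Prop :=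
  2 ≤ k ∧ C.card = 2 * k ∧
    (C.image Prod.fst).card = k ∧ (C.image Prod.snd).card = k ∧
    (∀ i ∈ C.image Prod.fst, (C.filter fun c => c.1 = i).card = 2) ∧
    (∀ j ∈ C.image Prod.snd, (C.filter fun c => c.2 = j).card = 2)

def rowVec (I J : ℕ) (i : Fin I) : Unit ⊕ Fin (I - 1) ⊕ Fin (J - 1) → ℝ :=
  fun r => match r with
  | Sum.inl _ => 1
  | Sum.inr (Sum.inl a) => if (i : ℕ) = (a : ℕ) then 1 else 0
  | Sum.inr (Sum.inr _) => 0

def colVec (I J : ℕ) (j : Fin J) : Unit ⊕ Fin (I - 1) ⊕ Fin (J - 1) → ℝ :=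
  fun r => match r with
  | Sum.inl _ => 0
  | Sum.inr (Sum.inl _) => 0
  | Sum.inr (Sum.inr b) => if (j : ℕ) = (b : ℕ) then 1 else 0

lemma designCol_eq (I J : ℕ) (c : Fin I × Fin J) :
    designCol I J c = rowVec I J c.1 + colVec I J c.2 := by
  funext r
  rcases r with _ | (a | b) <;> simp [designCol, rowVec, colVec]

theorem stmt1 (I J : ℕ) (S C : Finset (Fin I × Fin J)) (k : ℕ) (hk : 2 ≤ k)
    (hCS : C ⊆ S) (hC : IsKCycle k C) :
    ¬ LinearIndependent ℝ (fun c : S => designCol I J c.val) := by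
  intro hli
  obtain ⟨-, hcard, hrows, hcols, -, -⟩ := hC
  set rows : Finset (Fin I) := C.image Prod.fst with hrdef
  set cols : Finset (Fin J) := C.image Prod.snd with hcdef
  -- pick a base column
  have hcolsne : cols.Nonempty := by
    rw [← Finset.card_pos, hcols]; omega
  obtain ⟨j0, hj0⟩ := hcolsne
  -- the spanning set
  set T : Finset (Unit ⊕ Fin (I - 1) ⊕ Fin (J - 1) → ℝ) :=
    (rows.image fun i => rowVec I J i + colVec I J j0) ∪
    ((cols.erase j0).image fun j => colVec I J j - colVec I J j0) with hTdef
  have hTcard : T.card ≤ 2 * k - 1 := by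
    calc T.card ≤ (rows.image fun i => rowVec I J i + colVec I J j0).card
        + ((cols.erase j0).image fun j => colVec I J j - colVec I J j0).card :=
          Finset.card_union_le _ _
      _ ≤ rows.card + (cols.erase j0).card := by
          gcongr <;> exact Finset.card_image_le
      _ ≤ k + (k - 1) := by
          rw [hrows, Finset.card_erase_of_mem hj0, hcols]
      _ ≤ 2 * k - 1 := by omega
  -- every design column of a cell of C lies in the span of T
  have hmem : ∀ c ∈ C, designCol I J c ∈ Submodule.span ℝ (T : Set _) := by
    intro c hc
    have hi : c.1 ∈ rows := Finset.mem_image_of_mem _ hc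
    have hj : c.2 ∈ cols := Finset.mem_image_of_mem _ hc
    have h1 : rowVec I J c.1 + colVec I J j0 ∈ Submodule.span ℝ (T : Set _) := by
      apply Submodule.subset_span
      simp only [hTdef, Finset.coe_union, Set.mem_union, Finset.coe_image]
      left
      exact ⟨c.1, hi, rfl⟩
    by_cases hjj : c.2 = j0
    · rw [designCol_eq, hjj]; exact h1
    · have h2 : colVec I J c.2 - colVec I J j0 ∈ Submodule.span ℝ (T : Set _) := by
        apply Submodule.subset_span
        simp only [hTdef, Finset.coe_union, Set.mem_union, Finset.coe_image]
        right
        exact ⟨c.2, Finset.mem_erase.2 ⟨hjj, hj⟩, rfl⟩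
      have : designCol I J c =
          (rowVec I J c.1 + colVec I J j0) + (colVec I J c.2 - colVec I J j0) := by
        rw [designCol_eq]; ring
      rw [this]
      exact Submodule.add_mem _ h1 h2
  -- restrict the family to C; it stays linearly independent
  have hli' : LinearIndependent ℝ (fun c : C => designCol I J c.val) := by
    have := hli.comp (fun c : C => (⟨c.val, hCS c.prop⟩ : S))
      (by intro a b h; exact Subtype.ext (congrArg (fun x : S => x.val) h))
    exact this
  -- corestrict to the span of T
  set W := Submodule.span ℝ (T : Set (Unit ⊕ Fin (I - 1) ⊕ Fin (J - 1) → ℝ)) with hW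
  have hliW : LinearIndependent ℝ
      (fun c : C => (⟨designCol I J c.val, hmem c.val c.prop⟩ : W)) := by
    apply LinearIndependent.of_comp W.subtype
    exact hli'
  have hfd : FiniteDimensional ℝ W := by
    apply FiniteDimensional.span_of_finite
    exact T.finite_toSet
  have hle : Fintype.card C ≤ Module.finrank ℝ W :=
    hliW.fintype_card_le_finrank
  have hWr : Module.finrank ℝ W ≤ T.card := finrank_span_finset_le_card T
  have : C.card ≤ 2 * k - 1 := by
    rw [← Fintype.card_coe]
    exact le_trans hle (le_trans hWr hTcard)
  omega
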